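/- The projection onto the first coordinate, G_W → ℂˣ, (α1, α2) ↦ α1, is an injective group homomorphism whose image is exactly the group of N-th roots of unity in ℂˣ, where N := a1*a2 − 1. (Equivalently: for each (α1, α2) ∈ G_W one has α1^N = 1 and α2^N = 1, the value of α1 uniquely determines α2, and every N-th root of unity occurs as the first coordinate of some element of G_W.) -/

import Mathlib

noncomputable section

/-- The maximal group of diagonal symmetries of the two-dimensional loop
potential `W = X1^a1 * X2 + X2^a2 * X1`. -/
def loopSymGroup (a1 a2 : ℕ) : Subgroup (ℂˣ × ℂˣ) where
  carrier := {p | (p.1 : ℂ) ^ a1 * (p.2 : ℂ) = 1 ∧ (p.2 : ℂ) ^ a2 * (p.1 : ℂ) = 1}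
  one_mem' := by simp
  mul_mem' := by
    rintro ⟨x1, x2⟩ ⟨y1, y2⟩ ⟨hx1, hx2⟩ ⟨hy1, hy2⟩
    refine ⟨?_, ?_⟩
    · show ((x1 * y1 : ℂˣ) : ℂ) ^ a1 * ((x2 * y2 : ℂˣ) : ℂ) = 1
      push_cast
      rw [mul_pow]
      calc (x1:ℂ)^a1 * (y1:ℂ)^a1 * ((x2:ℂ) * (y2:ℂ))
          = ((x1:ℂ)^a1 * x2) * ((y1:ℂ)^a1 * y2) := by ring
        _ = 1 := by rw [hx1, hy1, one_mul]
    · show ((x2 * y2 : ℂˣ) : ℂ) ^ a2 * ((x1 * y1 : ℂˣ) : ℂ) = 1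
      push_cast
      rw [mul_pow]
      calc (x2:ℂ)^a2 * (y2:ℂ)^a2 * ((x1:ℂ) * (y1:ℂ))
          = ((x2:ℂ)^a2 * x1) * ((y2:ℂ)^a2 * y1) := by ring
        _ = 1 := by rw [hx2, hy2, one_mul]
  inv_mem' := by
    rintro ⟨x1, x2⟩ ⟨h1, h2⟩
    refine ⟨?_, ?_⟩
    · show ((x1⁻¹ : ℂˣ) : ℂ) ^ a1 * ((x2⁻¹ : ℂˣ) : ℂ) = 1
      rw [Units.val_inv_eq_inv_val, Units.val_inv_eq_inv_val, inv_pow, ← mul_inv, h1, inv_one]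
    · show ((x2⁻¹ : ℂˣ) : ℂ) ^ a2 * ((x1⁻¹ : ℂˣ) : ℂ) = 1
      rw [Units.val_inv_eq_inv_val, Units.val_inv_eq_inv_val, inv_pow, ← mul_inv, h2, inv_one]


/-- The projection onto the first coordinate `G_W → ℂˣ` is an injective group
homomorphism whose image is exactly the group of `N`-th roots of unity,
`N = a1*a2 - 1`. -/
theorem loopSymGroup_first_proj (a1 a2 : ℕ) (ha1 : 2 ≤ a1) (ha2 : 2 ≤ a2)
    (N : ℕ) (hN : N = a1 * a2 - 1) :
    (∀ g h : loopSymGroup a1 a2,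
        ((g * h : loopSymGroup a1 a2) : ℂˣ × ℂˣ).1 =
          ((g : ℂˣ × ℂˣ)).1 * ((h : ℂˣ × ℂˣ)).1) ∧
    Function.Injective (fun g : loopSymGroup a1 a2 => ((g : ℂˣ × ℂˣ)).1) ∧
    Set.range (fun g : loopSymGroup a1 a2 => ((g : ℂˣ × ℂˣ)).1) =
      {x : ℂˣ | x ^ N = 1} := by
  have hNN : N + 1 = a1 * a2 := by
    have : 1 ≤ a1 * a2 := Nat.one_le_iff_ne_zero.mpr (by positivity)
    omega
  refine ⟨fun g h => rfl, ?_, ?_⟩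
  · rintro ⟨⟨x1, x2⟩, hx1, hx2⟩ ⟨⟨y1, y2⟩, hy1, hy2⟩ h
    simp only at h
    subst h
    have hc : (x1 : ℂ) ^ a1 * (x2 : ℂ) = (x1 : ℂ) ^ a1 * (y2 : ℂ) := by rw [hx1, hy1]
    have h2 : x2 = y2 := Units.ext (mul_left_cancel₀ (pow_ne_zero _ x1.ne_zero) hc)
    subst h2
    rfl
  · ext x
    constructor
    · rintro ⟨⟨⟨x1, x2⟩, h1, h2⟩, rfl⟩
      show x1 ^ N = 1
      have hx2 : (x2 : ℂ) = ((x1 : ℂ) ^ a1)⁻¹ := by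
        field_simp
        linear_combination h1
      rw [hx2] at h2
      have hx1 : (x1 : ℂ) ^ (a1 * a2) = (x1 : ℂ) := by
        have hne : (x1 : ℂ) ^ (a1 * a2) ≠ 0 := pow_ne_zero _ x1.ne_zero
        field_simp [inv_pow, ← pow_mul] at h2
        rw [one_div, inv_pow, ← pow_mul] at h2
        simpa using (eq_inv_mul_iff_mul_eq₀ hne).mp h2.symm
      have : (x1 : ℂ) ^ N * (x1 : ℂ) = (x1 : ℂ) := by
        rw [← pow_succ, hNN] at *
        exact hx1
      have hpow : (x1 : ℂ) ^ N = 1 := mul_right_cancel₀ x1.ne_zero (by rw [this, one_mul])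
      exact Units.ext (by push_cast; exact hpow)
    · intro hx
      refine ⟨⟨⟨x, (x ^ a1)⁻¹⟩, ?_, ?_⟩, rfl⟩
      · show (x : ℂ) ^ a1 * (((x ^ a1)⁻¹ : ℂˣ) : ℂ) = 1
        rw [Units.val_inv_eq_inv_val]
        push_cast
        field_simp
      · show (((x ^ a1)⁻¹ : ℂˣ) : ℂ) ^ a2 * (x : ℂ) = 1
        have : ((x ^ a1)⁻¹) ^ a2 * x = 1 := by
          have hxi : x⁻¹ ^ N = 1 := by rw [inv_pow, hx, inv_one]
          rw [← inv_pow, ← pow_mul, ← hNN, pow_succ, hxi, one_mul, inv_mul_cancel]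
        calc (((x ^ a1)⁻¹ : ℂˣ) : ℂ) ^ a2 * (x : ℂ)
            = ((((x ^ a1)⁻¹) ^ a2 * x : ℂˣ) : ℂ) := by push_cast; ring
          _ = 1 := by rw [this]; rfl


end
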